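/- Let H be a real inner product space with two inner products ⟨·,·⟩_B and ⟨·,·⟩_L (with induced norms ‖·‖_B and ‖·‖_L). Suppose u, v ∈ H with v ≠ 0 satisfy ⟨v, φ⟩_B = R(u) ⟨u, φ⟩_L for all φ ∈ H, where R(w) := ‖w‖_B² / ‖w‖_L² for w ≠ 0. Then R(v) ‖v‖_L ≤ R(u) ‖u‖_L. -/

import Mathlib

/-- Inverse iteration step decreases the product R(·)‖·‖_L :
if ⟨v, φ⟩_B = R(u) ⟨u, φ⟩_L for all φ, then R(v)‖v‖_L ≤ R(u)‖u‖_L. -/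
theorem stmt_0 {V : Type*} [AddCommGroup V] [Module ℝ V]
    (B L : LinearMap.BilinForm ℝ V)
    (hBsymm : ∀ x y, B x y = B y x) (hLsymm : ∀ x y, L x y = L y x)
    (hBpos : ∀ x, x ≠ 0 → 0 < B x x) (hLpos : ∀ x, x ≠ 0 → 0 < L x x)
    (u v : V) (hu : u ≠ 0) (hv : v ≠ 0)
    (hiter : ∀ φ : V, B v φ = (B u u / L u u) * L u φ) :
    (B v v / L v v) * Real.sqrt (L v v) ≤ (B u u / L u u) * Real.sqrt (L u u) := by
  set a := L u u with ha
  set b := L v v with hb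
  set c := L u v with hc
  have hapos : 0 < a := hLpos u hu
  have hbpos : 0 < b := hLpos v hv
  have hRupos : 0 < B u u / a := div_pos (hBpos u hu) hapos
  have hBvv : B v v = (B u u / a) * c := hiter v
  -- Cauchy–Schwarz for L
  have hLnn : ∀ x : V, 0 ≤ L x x := by
    intro x
    rcases eq_or_ne x 0 with rfl | hx
    · simp
    · exact (hLpos x hx).le
  have hCS : c ^ 2 ≤ a * b := by
    have h := hLnn (b • u - c • v)
    have hexp : L (b • u - c • v) (b • u - c • v)
        = b ^ 2 * a - 2 * b * c * c + c ^ 2 * b := by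
      simp [LinearMap.map_sub, map_sub, LinearMap.map_smul, map_smul, smul_eq_mul,
        ← ha, ← hb, ← hc, hLsymm v u]
      ring
    rw [hexp] at h
    nlinarith [h, hbpos, mul_pos hbpos hbpos]
  have hcpos : 0 < c := by
    have := hBpos v hv
    rw [hBvv] at this
    by_contra hle
    push_neg at hle
    exact absurd this (not_lt.mpr (mul_nonpos_of_nonneg_of_nonpos hRupos.le hle))
  have hcle : c ≤ Real.sqrt a * Real.sqrt b := by
    have : c = Real.sqrt (c ^ 2) := (Real.sqrt_sq hcpos.le).symm
    rw [this, ← Real.sqrt_mul hapos.le]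
    exact Real.sqrt_le_sqrt hCS
  have hsb : Real.sqrt b > 0 := Real.sqrt_pos.mpr hbpos
  have hsbsq : Real.sqrt b * Real.sqrt b = b := Real.mul_self_sqrt hbpos.le
  rw [hBvv]
  have key : (B u u / a) * c / Real.sqrt b ≤ (B u u / a) * Real.sqrt a := by
    rw [div_le_iff₀ hsb]
    calc (B u u / a) * c ≤ (B u u / a) * (Real.sqrt a * Real.sqrt b) :=
          mul_le_mul_of_nonneg_left hcle hRupos.le
      _ = (B u u / a) * Real.sqrt a * Real.sqrt b := by ring
  calc (B u u / a) * c / b * Real.sqrt b = (B u u / a) * c / Real.sqrt b := by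
        have ha' : a ≠ 0 := ne_of_gt hapos
        have hsb' : Real.sqrt b ≠ 0 := ne_of_gt hsb
        field_simp
        linear_combination ((B u) u) * hsbsq
    _ ≤ (B u u / a) * Real.sqrt a := key
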